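/- Let ρ₀ ∈ [-1,1] and define the sequence ρ_{ℓ+1} = ρ_ℓ + (1/π)·( √(1-ρ_ℓ²) − ρ_ℓ·arccos ρ_ℓ ) for ℓ ≥ 0. Then ρ_ℓ ∈ [-1,1] for all ℓ, the sequence (ρ_ℓ) is nondecreasing, and lim_{ℓ→∞} ρ_ℓ = 1. -/

import Mathlib

open Real Filter

private noncomputable def gfun : ℝ → ℝ := fun θ => Real.sin θ - θ * Real.cos θ

private lemma gderiv (θ : ℝ) : HasDerivAt gfun (θ * Real.sin θ) θ := by
  have h : HasDerivAt (fun θ : ℝ => Real.sin θ - θ * Real.cos θ)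
      (Real.cos θ - (1 * Real.cos θ + θ * (-Real.sin θ))) θ :=
    (Real.hasDerivAt_sin θ).sub ((hasDerivAt_id θ).mul (Real.hasDerivAt_cos θ))
  convert h using 1
  · rfl
  · ring

private lemma g_nonneg {θ : ℝ} (hθ : θ ∈ Set.Icc 0 π) : 0 ≤ gfun θ := by
  have hmono : MonotoneOn gfun (Set.Icc 0 π) := by
    apply monotoneOn_of_deriv_nonneg (convex_Icc 0 π)
    · exact fun x _ => ((gderiv x).continuousAt).continuousWithinAt
    · exact fun x _ => ((gderiv x).differentiableAt).differentiableWithinAt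
    · intro x hx
      rw [interior_Icc] at hx
      rw [(gderiv x).deriv]
      exact mul_nonneg hx.1.le (Real.sin_nonneg_of_nonneg_of_le_pi hx.1.le hx.2.le)
  have h0 : gfun 0 = 0 := by simp [gfun]
  have := hmono (Set.left_mem_Icc.2 Real.pi_pos.le) hθ hθ.1
  linarith

private lemma g_pos {θ : ℝ} (h1 : 0 < θ) (h2 : θ ≤ π) : 0 < gfun θ := by
  have hmono : StrictMonoOn gfun (Set.Icc 0 π) := by
    apply strictMonoOn_of_deriv_pos (convex_Icc 0 π)
    · exact fun x _ => ((gderiv x).continuousAt).continuousWithinAt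
    · intro x hx
      rw [interior_Icc] at hx
      rw [(gderiv x).deriv]
      exact mul_pos hx.1 (Real.sin_pos_of_pos_of_lt_pi hx.1 hx.2)
  rcases eq_or_lt_of_le h2 with rfl | h2
  · simp [gfun]; positivity
  · have h0 : gfun 0 = 0 := by simp [gfun]
    have := hmono (Set.left_mem_Icc.2 Real.pi_pos.le) ⟨h1.le, h2.le⟩ h1
    linarith

private noncomputable def hfun : ℝ → ℝ := fun θ => π - Real.sin θ - (π - θ) * Real.cos θ

private lemma h_nonneg {θ : ℝ} (hθ : θ ∈ Set.Icc 0 π) : 0 ≤ hfun θ := by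
  have hd : ∀ x : ℝ, HasDerivAt hfun ((π - x) * Real.sin x) x := by
    intro x
    have h : HasDerivAt (fun θ : ℝ => π - Real.sin θ - (π - θ) * Real.cos θ)
        (0 - Real.cos x - ((0 - 1) * Real.cos x + (π - x) * (-Real.sin x))) x :=
      ((hasDerivAt_const x π).sub (Real.hasDerivAt_sin x)).sub
        (((hasDerivAt_const x π).sub (hasDerivAt_id x)).mul (Real.hasDerivAt_cos x))
    convert h using 1
    · rfl
    · ring
  have hmono : MonotoneOn hfun (Set.Icc 0 π) := by
    apply monotoneOn_of_deriv_nonneg (convex_Icc 0 π)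
    · exact fun x _ => ((hd x).continuousAt).continuousWithinAt
    · exact fun x _ => ((hd x).differentiableAt).differentiableWithinAt
    · intro x hx
      rw [interior_Icc] at hx
      rw [(hd x).deriv]
      exact mul_nonneg (by linarith [hx.2]) (Real.sin_nonneg_of_nonneg_of_le_pi hx.1.le hx.2.le)
  have h0 : hfun 0 = 0 := by simp [hfun]
  have := hmono (Set.left_mem_Icc.2 Real.pi_pos.le) hθ hθ.1
  linarith

private lemma step_eq {ρ : ℝ} (h1 : -1 ≤ ρ) (h2 : ρ ≤ 1) :
    Real.sqrt (1 - ρ ^ 2) - ρ * Real.arccos ρ = gfun (Real.arccos ρ) := by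
  simp only [gfun, Real.sin_arccos, Real.cos_arccos h1 h2]
  ring

private lemma step_nonneg {ρ : ℝ} (h1 : -1 ≤ ρ) (h2 : ρ ≤ 1) :
    0 ≤ Real.sqrt (1 - ρ ^ 2) - ρ * Real.arccos ρ := by
  rw [step_eq h1 h2]
  exact g_nonneg ⟨Real.arccos_nonneg ρ, Real.arccos_le_pi ρ⟩

private lemma step_le_one {ρ : ℝ} (h1 : -1 ≤ ρ) (h2 : ρ ≤ 1) :
    ρ + (1 / π) * (Real.sqrt (1 - ρ ^ 2) - ρ * Real.arccos ρ) ≤ 1 := by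
  set θ := Real.arccos ρ with hθdef
  have hθ : θ ∈ Set.Icc 0 π := ⟨Real.arccos_nonneg ρ, Real.arccos_le_pi ρ⟩
  have hc : Real.cos θ = ρ := Real.cos_arccos h1 h2
  have hs : Real.sin θ = Real.sqrt (1 - ρ ^ 2) := Real.sin_arccos ρ
  have hh := h_nonneg hθ
  simp only [hfun] at hh
  have hpi := Real.pi_pos
  have h1π : (0:ℝ) < 1 / π := by positivity
  have key : Real.sqrt (1 - ρ ^ 2) - ρ * θ ≤ π * (1 - ρ) := by
    rw [← hs, ← hc]; nlinarith [hh]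
  have h2' := mul_le_mul_of_nonneg_left key h1π.le
  have heq : (1 / π) * (π * (1 - ρ)) = 1 - ρ := by field_simp
  rw [heq] at h2'
  linarith

theorem corr_recursion_converges_to_one (ρ₀ : ℝ) (hρ₀ : ρ₀ ∈ Set.Icc (-1 : ℝ) 1)
    (ρs : ℕ → ℝ) (h0 : ρs 0 = ρ₀)
    (hrec : ∀ ℓ : ℕ, ρs (ℓ + 1)
      = ρs ℓ + (1 / π) * (Real.sqrt (1 - ρs ℓ ^ 2) - ρs ℓ * Real.arccos (ρs ℓ))) :
    (∀ ℓ : ℕ, ρs ℓ ∈ Set.Icc (-1 : ℝ) 1) ∧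
    Monotone ρs ∧
    Tendsto ρs atTop (nhds 1) := by
  have hpi := Real.pi_pos
  have hmem : ∀ ℓ : ℕ, ρs ℓ ∈ Set.Icc (-1 : ℝ) 1 := by
    intro ℓ
    induction ℓ with
    | zero => rw [h0]; exact hρ₀
    | succ n ih =>
      rw [hrec n]
      constructor
      · have := step_nonneg ih.1 ih.2
        have : 0 ≤ (1 / π) * (Real.sqrt (1 - ρs n ^ 2) - ρs n * Real.arccos (ρs n)) :=
          mul_nonneg (by positivity) this
        linarith [ih.1]
      · exact step_le_one ih.1 ih.2
  have hmono : Monotone ρs := by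
    apply monotone_nat_of_le_succ
    intro n
    rw [hrec n]
    have := step_nonneg (hmem n).1 (hmem n).2
    nlinarith [mul_nonneg (le_of_lt (by positivity : (0:ℝ) < 1/π)) this]
  have hbdd : BddAbove (Set.range ρs) := ⟨1, by rintro x ⟨ℓ, rfl⟩; exact (hmem ℓ).2⟩
  set L := ⨆ ℓ, ρs ℓ with hLdef
  have hL : Tendsto ρs atTop (nhds L) := tendsto_atTop_ciSup hmono hbdd
  have hL1 : L ≤ 1 := ciSup_le fun ℓ => (hmem ℓ).2
  have hLm1 : -1 ≤ L := le_trans (hmem 0).1 (le_ciSup hbdd 0)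
  -- take limits in the recursion
  have hL' : Tendsto (fun ℓ => ρs (ℓ + 1)) atTop (nhds L) :=
    hL.comp (tendsto_add_atTop_nat 1)
  have hcont : Tendsto (fun ℓ => ρs ℓ + (1 / π) *
      (Real.sqrt (1 - ρs ℓ ^ 2) - ρs ℓ * Real.arccos (ρs ℓ))) atTop
      (nhds (L + (1 / π) * (Real.sqrt (1 - L ^ 2) - L * Real.arccos L))) := by
    have hsqrt : Tendsto (fun ℓ => Real.sqrt (1 - ρs ℓ ^ 2)) atTop
        (nhds (Real.sqrt (1 - L ^ 2))) :=
      (Real.continuous_sqrt.continuousAt.tendsto.comp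
        (((tendsto_const_nhds).sub ((hL.pow 2))) : _))
    have harccos : Tendsto (fun ℓ => Real.arccos (ρs ℓ)) atTop (nhds (Real.arccos L)) :=
      (Real.continuous_arccos.continuousAt.tendsto.comp hL)
    exact hL.add (tendsto_const_nhds.mul (hsqrt.sub (hL.mul harccos)))
  have hfix : L = L + (1 / π) * (Real.sqrt (1 - L ^ 2) - L * Real.arccos L) := by
    apply tendsto_nhds_unique hL' ((funext hrec : (fun ℓ => ρs (ℓ+1)) = _) ▸ hcont)
  have hzero : Real.sqrt (1 - L ^ 2) - L * Real.arccos L = 0 := by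
    have h1π : (1:ℝ)/π ≠ 0 := by positivity
    field_simp at hfix
    nlinarith [hfix]
  have hL1' : L = 1 := by
    by_contra hne
    have hlt : 0 < Real.arccos L := by
      rcases (Real.arccos_nonneg L).lt_or_eq with h | h
      · exact h
      · exact absurd (le_antisymm hL1 (Real.arccos_eq_zero.1 h.symm)) hne
    have := g_pos hlt (Real.arccos_le_pi L)
    rw [← step_eq hLm1 hL1] at this
    linarith [hzero, this]
  exact ⟨hmem, hmono, hL1' ▸ hL⟩
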